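/- Let d be an odd prime and ε = 2π/d. For q ≠ q' both in {1,...,d-1}, and any m, m' ∈ {0,...,d-1}, τ, τ' ∈ {±1}, and complex numbers β, β', the vectors v = N·(1/√d)∑_{j=0}^{d-1} e^{iχ_j}|jq⟩⊗(|+⟩ + β e^{2iqεj}|−⟩) and v' = N'·(1/√d)∑_{j=0}^{d-1} e^{iχ'_j}|jq'⟩⊗(|+⟩ + β' e^{2iq'εj}|−⟩), with χ_j = −(qε/2)j² + (mε+qπ)j, χ'_j = −(q'ε/2)j² + (m'ε+q'π)j, N = 1/√(1+|β|²), N' = 1/√(1+|β'|²), satisfy |⟨v'|v⟩| ≤ 1/√d. -/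

import Mathlib

open Real Finset

/-- The quantum-walk eigenvector
`v = N (1/√d) ∑_j e^{iχ_j} |jq⟩ ⊗ (|+⟩ + β e^{2iqεj}|−⟩)` in `ℂ^d ⊗ ℂ²`,
with `χ_j = −(qε/2)j² + (mε+qπ)j`, `N = 1/√(1+|β|²)`, `ε = 2π/d`, and
`|k⟩ = (1/√d) ∑_x e^{ikεx}|x⟩`. -/
noncomputable def qwGenEigvec (d q m : ℕ) (β : ℂ) : EuclideanSpace ℂ (Fin d × Fin 2) :=
  WithLp.toLp 2 fun (p : Fin d × Fin 2) =>
    ((1 / Real.sqrt (1 + ‖β‖ ^ 2) : ℝ) : ℂ) * (1 / Real.sqrt d : ℝ) *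
      ∑ j ∈ Finset.range d,
        Complex.exp (Complex.I *
            ((-((q : ℝ) * (2 * Real.pi / d) / 2) * (j : ℝ) ^ 2
              + ((m : ℝ) * (2 * Real.pi / d) + (q : ℝ) * Real.pi) * (j : ℝ)))) *
          ((1 / Real.sqrt d : ℝ) *
            Complex.exp (Complex.I * ((j * q : ℕ) : ℝ) * (2 * Real.pi / d) * ((p.1 : ℕ) : ℝ))) *
          (if p.2 = 0 then 1
            else β * Complex.exp (2 * Complex.I * q * (2 * Real.pi / d) * (j : ℝ)))

namespace QWAux

noncomputable def eI (r : ℝ) : ℂ := Complex.exp (Complex.I * r)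

lemma eI_add (r s : ℝ) : eI (r + s) = eI r * eI s := by
  simp [eI, Complex.ofReal_add, mul_add, Complex.exp_add]

lemma eI_sub (r s : ℝ) : eI (r - s) = eI r * eI (-s) := by
  rw [sub_eq_add_neg, eI_add]

lemma abs_eI (r : ℝ) : ‖eI r‖ = 1 := by
  rw [eI, mul_comm]; exact Complex.norm_exp_ofReal_mul_I r

lemma conj_eI (r : ℝ) : (starRingEnd ℂ) (eI r) = eI (-r) := by
  rw [eI, eI, ← Complex.exp_conj, map_mul, Complex.conj_I, Complex.conj_ofReal,
    Complex.ofReal_neg]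
  ring_nf

lemma eI_two_pi_int (n : ℤ) : eI (2 * π * n) = 1 := by
  rw [eI]
  convert Complex.exp_int_mul_two_pi_mul_I n using 2
  push_cast; ring

lemma eI_nat_modeq (d : ℕ) (hd : 0 < d) {M N : ℕ} (h : M ≡ N [MOD d]) :
    eI (2 * π / d * M) = eI (2 * π / d * N) := by
  wlog hMN : N ≤ M generalizing M N
  · exact (this h.symm (le_of_not_ge hMN)).symm
  obtain ⟨k, hk⟩ := (Nat.modEq_iff_dvd' hMN).mp h.symm
  have hM : M = N + d * k := by omega
  subst hM
  have hd' : (d:ℝ) ≠ 0 := Nat.cast_ne_zero.mpr hd.ne'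
  have : 2 * π / d * ((N + d * k : ℕ) : ℝ) = 2 * π / d * N + 2 * π * k := by
    push_cast; field_simp
  rw [this, eI_add]
  have h2 : eI (2 * π * (k:ℝ)) = 1 := by
    have := eI_two_pi_int (k:ℤ); push_cast at this; exact this
  rw [h2, mul_one]

noncomputable def chi (d q m : ℕ) (x : ℝ) : ℝ :=
  -((q : ℝ) * (2 * π / d) / 2) * x ^ 2 + ((m : ℝ) * (2 * π / d) + q * π) * x

lemma chi_add (d q m : ℕ) (x y : ℝ) :
    chi d q m (x + y) = chi d q m x + chi d q m y - (q : ℝ) * (2 * π / d) * (x * y) := by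
  unfold chi; ring

lemma eI_chi_modeq (d q m : ℕ) (hd : 0 < d) {a b : ℕ} (h : a ≡ b [MOD d]) :
    eI (chi d q m a) = eI (chi d q m b) := by
  have hd' : (d:ℝ) ≠ 0 := Nat.cast_ne_zero.mpr hd.ne'
  -- key: shift by d*k
  have key : ∀ (b k : ℕ), eI (chi d q m (b + d * k)) = eI (chi d q m b) := by
    intro b k
    obtain ⟨e, he⟩ : Even ((k:ℤ) * (k - 1)) := Int.even_mul_pred_self k
    rw [chi_add]
    have h1 : chi d q m ((d : ℝ) * k) - (q : ℝ) * (2 * π / d) * ((b:ℝ) * ((d:ℝ) * k))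
        = 2 * π * (((m : ℤ) * k - q * d * e - q * b * k : ℤ) : ℝ) := by
      have he' : (k : ℝ) * ((k : ℝ) - 1) = 2 * (e : ℝ) := by
        have := congrArg (Int.cast : ℤ → ℝ) he; push_cast at this; linarith
      unfold chi; push_cast
      have hd2 : ((d:ℝ))⁻¹ * (d:ℝ) = 1 := inv_mul_cancel₀ hd'
      field_simp
      linear_combination (-((q:ℝ) * (d:ℝ))) * he'
    have : chi d q m (b:ℝ) + chi d q m ((d:ℝ)*k) - (q:ℝ)*(2*π/d)*((b:ℝ)*((d:ℝ)*k))
        = chi d q m (b:ℝ) + 2 * π * (((m : ℤ) * k - q * d * e - q * b * k : ℤ) : ℝ) := by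
      rw [← h1]; ring
    rw [show chi d q m ↑b + chi d q m (↑d * ↑k) - ↑q * (2 * π / ↑d) * (↑b * (↑d * ↑k))
        = chi d q m (b:ℝ) + 2 * π * (((m : ℤ) * k - q * d * e - q * b * k : ℤ) : ℝ) from this,
      eI_add, eI_two_pi_int, mul_one]
  wlog hab : b ≤ a generalizing a b
  · exact (this h.symm (le_of_not_ge hab)).symm
  obtain ⟨k, hk⟩ := (Nat.modEq_iff_dvd' hab).mp h.symm
  have : a = b + d * k := by omega
  rw [this]
  have := key b k
  push_cast at this ⊢
  exact this

lemma zmod_sum_eq (d : ℕ) [NeZero d] (f : ZMod d → ℂ) :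
    ∑ k : ZMod d, f k = ∑ j ∈ Finset.range d, f (j : ZMod d) := by
  refine Finset.sum_nbij' (fun k => k.val) (fun n => (n : ZMod d)) ?_ ?_ ?_ ?_ ?_ <;>
    simp [ZMod.val_lt, ZMod.natCast_zmod_val, ZMod.val_cast_of_lt, Finset.mem_range]
  intro a ha
  exact Nat.mod_eq_of_lt ha

noncomputable def ea (d : ℕ) (z : ZMod d) : ℂ := eI (2 * π / d * z.val)

lemma ea_natCast (d : ℕ) [NeZero d] (N : ℕ) : ea d (N : ZMod d) = eI (2 * π / d * N) := by
  refine eI_nat_modeq d (Nat.pos_of_ne_zero (NeZero.ne d)) ?_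
  rw [ZMod.val_natCast]
  exact (Nat.mod_modEq N d)

lemma ea_add (d : ℕ) [NeZero d] (x y : ZMod d) : ea d (x + y) = ea d x * ea d y := by
  have hx : x = ((x.val : ℕ) : ZMod d) := (ZMod.natCast_zmod_val x).symm
  have hy : y = ((y.val : ℕ) : ZMod d) := (ZMod.natCast_zmod_val y).symm
  rw [hx, hy, ← Nat.cast_add, ea_natCast, ea_natCast, ea_natCast, ← eI_add]
  congr 1; push_cast; ring

lemma sum_ea_eq_zero (d : ℕ) [NeZero d] (hd : 1 < d) : ∑ k : ZMod d, ea d k = 0 := by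
  rw [zmod_sum_eq]
  have h1 : ∀ j ∈ Finset.range d, ea d (j : ZMod d) = (eI (2 * π / d)) ^ j := by
    intro j hj
    rw [ea_natCast]
    rw [eI, eI, ← Complex.exp_nat_mul]
    congr 1; push_cast; ring
  rw [Finset.sum_congr rfl h1]
  have hz : eI (2 * π / d) ≠ 1 := by
    rw [eI, Ne, Complex.exp_eq_one_iff]
    rintro ⟨n, hn⟩
    have hπ := Real.pi_pos
    have hd2 : (2:ℝ) ≤ d := by exact_mod_cast hd
    have hr : ((2 * π / d : ℝ) : ℂ) = ((2 * π * n : ℝ) : ℂ) := by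
      apply mul_left_cancel₀ Complex.I_ne_zero
      rw [hn]; push_cast; ring
    have hr' : 2 * π / (d:ℝ) = 2 * π * n := Complex.ofReal_injective hr
    have hnd : (n:ℝ) * d = 1 := by
      have hd' : (d:ℝ) ≠ 0 := by positivity
      field_simp at hr'
      nlinarith [hr']
    have hcase : (1:ℝ) ≤ (n:ℝ) ∨ (n:ℝ) ≤ 0 := by
      have : 1 ≤ n ∨ n ≤ 0 := by omega
      rcases this with h | h
      · left; exact_mod_cast h
      · right; exact_mod_cast h
    rcases hcase with h | h <;> nlinarith [hnd, hd2, h]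
  rw [geom_sum_eq hz]
  have hpow : eI (2 * π / d) ^ d = 1 := by
    rw [eI, ← Complex.exp_nat_mul]
    have : (d : ℂ) * (Complex.I * ((2 * π / d : ℝ) : ℂ)) = ((1:ℤ) : ℂ) * (2 * π * Complex.I) := by
      have hd' : (d:ℂ) ≠ 0 := Nat.cast_ne_zero.mpr (by omega)
      push_cast
      field_simp
    rw [this]
    exact Complex.exp_int_mul_two_pi_mul_I 1
  rw [hpow, sub_self, zero_div]

lemma sum_ea_mul_eq_zero (d : ℕ) [hF : Fact d.Prime] {w : ZMod d} (hw : w ≠ 0) :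
    ∑ k : ZMod d, ea d (w * k) = 0 := by
  have hbij : Function.Bijective (fun k : ZMod d => w * k) := mulLeft_bijective₀ w hw
  have := Fintype.sum_bijective (fun k : ZMod d => w * k) hbij
      (fun k => ea d (w * k)) (ea d) (fun x => rfl)
  rw [this]
  exact sum_ea_eq_zero d hF.out.one_lt

lemma gauss_bound (d : ℕ) [NeZero d] (u : ZMod d → ℂ)
    (h1 : ∀ k, ‖u k‖ ≤ 1)
    (h2 : ∀ h : ZMod d, h ≠ 0 → ∑ k : ZMod d, u (k + h) * (starRingEnd ℂ) (u k) = 0) :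
    ‖∑ k : ZMod d, u k‖ ≤ Real.sqrt d := by
  set S := ∑ k : ZMod d, u k with hS
  have e1 : ∀ k : ZMod d, ∑ j : ZMod d, u j * (starRingEnd ℂ) (u k)
      = ∑ h : ZMod d, u (k + h) * (starRingEnd ℂ) (u k) := fun k =>
    (Fintype.sum_equiv (Equiv.addLeft k) _ (fun j => u j * (starRingEnd ℂ) (u k))
      (fun h => by simp [Equiv.coe_addLeft])).symm
  have key : S * (starRingEnd ℂ) S
      = ∑ h : ZMod d, ∑ k : ZMod d, u (k + h) * (starRingEnd ℂ) (u k) :=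
    calc S * (starRingEnd ℂ) S
        = ∑ j : ZMod d, ∑ k : ZMod d, u j * (starRingEnd ℂ) (u k) := by
          rw [hS, map_sum, Finset.sum_mul_sum]
      _ = ∑ k : ZMod d, ∑ j : ZMod d, u j * (starRingEnd ℂ) (u k) := Finset.sum_comm
      _ = ∑ k : ZMod d, ∑ h : ZMod d, u (k + h) * (starRingEnd ℂ) (u k) :=
          Finset.sum_congr rfl fun k _ => e1 k
      _ = ∑ h : ZMod d, ∑ k : ZMod d, u (k + h) * (starRingEnd ℂ) (u k) := Finset.sum_comm
  have key2 : S * (starRingEnd ℂ) S = ∑ k : ZMod d, u k * (starRingEnd ℂ) (u k) := by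
    rw [key, Finset.sum_eq_single_of_mem 0 (Finset.mem_univ 0)]
    · simp
    · intro h _ hh; exact h2 h hh
  have hns : Complex.normSq S = ∑ k : ZMod d, Complex.normSq (u k) := by
    have h4 : ((Complex.normSq S : ℝ) : ℂ) = ((∑ k : ZMod d, Complex.normSq (u k) : ℝ) : ℂ) := by
      rw [← Complex.mul_conj, key2]
      push_cast
      exact Finset.sum_congr rfl fun k _ => (Complex.mul_conj (u k))
    exact_mod_cast h4
  have habs : ‖S‖ ^ 2 ≤ (d : ℝ) := by
    rw [Complex.sq_norm, hns]
    calc ∑ k : ZMod d, Complex.normSq (u k) ≤ ∑ _k : ZMod d, (1:ℝ) :=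
          Finset.sum_le_sum fun k _ => by
            rw [← Complex.sq_norm]
            nlinarith [h1 k, norm_nonneg (u k)]
      _ = (d : ℝ) := by simp [ZMod.card]
  calc ‖S‖ = Real.sqrt (‖S‖ ^ 2) := (Real.sqrt_sq (norm_nonneg S)).symm
    _ ≤ Real.sqrt d := Real.sqrt_le_sqrt habs

lemma eI_zero : eI 0 = 1 := by simp [eI]

lemma eI_mul_neg (r : ℝ) : eI r * eI (-r) = 1 := by
  rw [← eI_add]; simp [eI_zero]

lemma ea_zero (d : ℕ) [NeZero d] : ea d 0 = 1 := by
  simp [ea, ZMod.val_zero, eI_zero]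

lemma conj_ea (d : ℕ) [NeZero d] (z : ZMod d) : (starRingEnd ℂ) (ea d z) = ea d (-z) := by
  have h1 : ea d z * ea d (-z) = 1 := by rw [← ea_add]; simp [ea_zero]
  have h2 : ea d z * (starRingEnd ℂ) (ea d z) = 1 := by
    rw [ea, conj_eI, eI_mul_neg]
  rw [← inv_eq_of_mul_eq_one_right h1, ← inv_eq_of_mul_eq_one_right h2]

lemma eI_chi_val_add (d q m : ℕ) [NeZero d] (a b : ZMod d) :
    eI (chi d q m ((a + b).val)) =
      eI (chi d q m a.val) * eI (chi d q m b.val) *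
        eI (-((q : ℝ) * (2 * π / d) * ((a.val : ℝ) * (b.val : ℝ)))) := by
  have hd : 0 < d := Nat.pos_of_ne_zero (NeZero.ne d)
  have h1 : (a + b).val ≡ a.val + b.val [MOD d] := by
    rw [ZMod.val_add]; exact Nat.mod_modEq _ d
  rw [eI_chi_modeq d q m hd h1]
  have h2 : ((a.val + b.val : ℕ) : ℝ) = (a.val : ℝ) + (b.val : ℝ) := by push_cast; ring
  rw [h2, chi_add, sub_eq_add_neg, eI_add, eI_add]

lemma eI_lin_val_add (d c : ℕ) [NeZero d] (a b : ZMod d) :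
    eI (2 * π / d * ((c * (a + b).val : ℕ) : ℝ)) =
      eI (2 * π / d * ((c * a.val : ℕ) : ℝ)) * eI (2 * π / d * ((c * b.val : ℕ) : ℝ)) := by
  have hd : 0 < d := Nat.pos_of_ne_zero (NeZero.ne d)
  have h1 : c * (a + b).val ≡ c * a.val + c * b.val [MOD d] := by
    rw [ZMod.val_add, ← Nat.mul_add]
    exact Nat.ModEq.mul_left c (Nat.mod_modEq _ d)
  rw [eI_nat_modeq d hd h1, ← eI_add]
  congr 1; push_cast; ring

noncomputable def uu (d q q' m m' t : ℕ) (c : ZMod d) (k : ZMod d) : ℂ :=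
  eI (chi d q m k.val) * (starRingEnd ℂ) (eI (chi d q' m' ((c * k).val))) *
    eI (2 * π / d * ((2 * t * q * k.val : ℕ) : ℝ)) *
    (starRingEnd ℂ) (eI (2 * π / d * ((2 * t * q' * ((c * k).val) : ℕ) : ℝ)))

lemma abs_uu (d q q' m m' t : ℕ) (c k : ZMod d) : ‖uu d q q' m m' t c k‖ = 1 := by
  simp [uu, map_mul, abs_eI]

lemma uu_mul_conj_self (d q q' m m' t : ℕ) (c k : ZMod d) :
    uu d q q' m m' t c k * (starRingEnd ℂ) (uu d q q' m m' t c k) = 1 := by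
  rw [Complex.mul_conj]
  norm_cast
  rw [← Complex.sq_norm, abs_uu]; norm_num

lemma uu_shift (d q q' m m' t : ℕ) [NeZero d] (c k h : ZMod d) :
    uu d q q' m m' t c (k + h) =
      uu d q q' m m' t c k * uu d q q' m m' t c h *
        ea d ((h * ((q' : ZMod d) * c ^ 2 - (q : ZMod d))) * k) := by
  have e1 := eI_chi_val_add d q m k h
  have e2 := eI_chi_val_add d q' m' (c * k) (c * h)
  rw [← mul_add] at e2
  have e3 := eI_lin_val_add d (2 * t * q) k h
  have e4 := eI_lin_val_add d (2 * t * q') (c * k) (c * h)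
  rw [← mul_add] at e4
  unfold uu
  rw [e1, e2, e3, e4]
  -- now reorganize
  rw [map_mul, map_mul, map_mul, conj_eI (-((q' : ℝ) * (2 * π / d) * _))]
  have hq : eI (-(-((q' : ℝ) * (2 * π / d) * (((c * k).val : ℝ) * ((c * h).val : ℝ)))))
      = ea d ((q' : ZMod d) * (c * k) * (c * h)) := by
    rw [neg_neg]
    have : (q' : ℝ) * (2 * π / d) * (((c * k).val : ℝ) * ((c * h).val : ℝ))
        = 2 * π / d * ((q' * (c * k).val * (c * h).val : ℕ) : ℝ) := by push_cast; ring
    rw [this, ← ea_natCast]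
    congr 1
    push_cast [ZMod.natCast_zmod_val]
    ring
  have hq2 : eI (-((q : ℝ) * (2 * π / d) * ((k.val : ℝ) * (h.val : ℝ))))
      = ea d (-((q : ZMod d) * k * h)) := by
    rw [← conj_ea]
    have : (q : ℝ) * (2 * π / d) * ((k.val : ℝ) * (h.val : ℝ))
        = 2 * π / d * ((q * k.val * h.val : ℕ) : ℝ) := by push_cast; ring
    rw [← conj_eI, this, ← ea_natCast]
    congr 2
    push_cast [ZMod.natCast_zmod_val]
    ring
  rw [hq, hq2]
  have hea : ea d (-((q : ZMod d) * k * h)) * ea d ((q' : ZMod d) * (c * k) * (c * h))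
      = ea d ((h * ((q' : ZMod d) * c ^ 2 - (q : ZMod d))) * k) := by
    rw [← ea_add]; congr 1; ring
  rw [← hea]
  ring

lemma uu_sum_bound (d q q' m m' t : ℕ) [hF : Fact d.Prime]
    (hq : (q : ZMod d) ≠ 0) (hq' : (q' : ZMod d) ≠ 0) (hne : (q : ZMod d) ≠ (q' : ZMod d)) :
    ‖∑ k : ZMod d, uu d q q' m m' t ((q : ZMod d) * (q' : ZMod d)⁻¹) k‖
      ≤ Real.sqrt d := by
  have : NeZero d := ⟨hF.out.ne_zero⟩
  set c : ZMod d := (q : ZMod d) * (q' : ZMod d)⁻¹ with hc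
  refine gauss_bound d _ (fun k => le_of_eq (abs_uu d q q' m m' t c k)) ?_
  intro h hh
  have hfield : (q' : ZMod d) * c ^ 2 - (q : ZMod d)
      = (q : ZMod d) * ((q : ZMod d) - (q' : ZMod d)) * ((q' : ZMod d))⁻¹ := by
    rw [hc]
    field_simp
  have hw : h * ((q' : ZMod d) * c ^ 2 - (q : ZMod d)) ≠ 0 := by
    rw [hfield]
    exact mul_ne_zero hh (mul_ne_zero (mul_ne_zero hq (sub_ne_zero.mpr hne)) (inv_ne_zero hq'))
  calc ∑ k : ZMod d, uu d q q' m m' t c (k + h) * (starRingEnd ℂ) (uu d q q' m m' t c k)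
      = ∑ k : ZMod d, uu d q q' m m' t c h * ea d ((h * ((q':ZMod d) * c^2 - q)) * k) := by
        refine Finset.sum_congr rfl fun k _ => ?_
        rw [uu_shift]
        have := uu_mul_conj_self d q q' m m' t c k
        calc uu d q q' m m' t c k * uu d q q' m m' t c h *
              ea d ((h * ((q':ZMod d) * c^2 - q)) * k) * (starRingEnd ℂ) (uu d q q' m m' t c k)
            = (uu d q q' m m' t c k * (starRingEnd ℂ) (uu d q q' m m' t c k)) *
              (uu d q q' m m' t c h * ea d ((h * ((q':ZMod d) * c^2 - q)) * k)) := by ring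
          _ = uu d q q' m m' t c h * ea d ((h * ((q':ZMod d) * c^2 - q)) * k) := by
              rw [this, one_mul]
    _ = uu d q q' m m' t c h * ∑ k : ZMod d, ea d ((h * ((q':ZMod d) * c^2 - q)) * k) := by
        rw [Finset.mul_sum]
    _ = 0 := by rw [sum_ea_mul_eq_zero d hw, mul_zero]

lemma sum_char (d : ℕ) [hF : Fact d.Prime] (w : ZMod d) :
    ∑ k : ZMod d, ea d (w * k) = if w = 0 then (d : ℂ) else 0 := by
  have : NeZero d := ⟨hF.out.ne_zero⟩
  split_ifs with h
  · subst h
    have h1 : ∀ k : ZMod d, ea d ((0 : ZMod d) * k) = 1 := by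
      intro k; rw [zero_mul]; simp [ea, ZMod.val_zero, eI]
    rw [Finset.sum_congr rfl fun k _ => h1 k]
    simp [ZMod.card]
  · exact sum_ea_mul_eq_zero d h

noncomputable def aa (d q m : ℕ) (β : ℂ) (j : ℕ) : ℂ :=
  (((1 / Real.sqrt (1 + ‖β‖ ^ 2)) * (1 / Real.sqrt d) * (1 / Real.sqrt d) : ℝ) : ℂ) *
    eI (chi d q m j)

noncomputable def fF (d q : ℕ) (j : ℕ) (x : Fin d) : ℂ :=
  eI (((j * q : ℕ) : ℝ) * (2 * π / d) * ((x : ℕ) : ℝ))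

noncomputable def gG (d q : ℕ) (β : ℂ) (j : ℕ) (s : Fin 2) : ℂ :=
  if s = 0 then 1 else β * eI (2 * (q : ℝ) * (2 * π / d) * (j : ℝ))

lemma x_sum (d : ℕ) [hF : Fact d.Prime] (q q' j j' : ℕ) :
    ∑ x : Fin d, (starRingEnd ℂ) (fF d q' j' x) * fF d q j x =
      if ((j * q : ℕ) : ZMod d) = ((j' * q' : ℕ) : ZMod d) then (d : ℂ) else 0 := by
  have : NeZero d := ⟨hF.out.ne_zero⟩
  set w : ZMod d := ((j * q : ℕ) : ZMod d) - ((j' * q' : ℕ) : ZMod d) with hw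
  have per : ∀ x : Fin d, (starRingEnd ℂ) (fF d q' j' x) * fF d q j x
      = ea d (w * ((x : ℕ) : ZMod d)) := by
    intro x
    have h1 : fF d q j x = ea d (((j * q : ℕ) : ZMod d) * ((x : ℕ) : ZMod d)) := by
      rw [fF]
      have : ((j * q : ℕ) : ℝ) * (2 * π / d) * ((x : ℕ) : ℝ)
          = 2 * π / d * ((j * q * (x : ℕ) : ℕ) : ℝ) := by push_cast; ring
      rw [this, ← ea_natCast]
      congr 1; push_cast; ring
    have h2 : fF d q' j' x = ea d (((j' * q' : ℕ) : ZMod d) * ((x : ℕ) : ZMod d)) := by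
      rw [fF]
      have : ((j' * q' : ℕ) : ℝ) * (2 * π / d) * ((x : ℕ) : ℝ)
          = 2 * π / d * ((j' * q' * (x : ℕ) : ℕ) : ℝ) := by push_cast; ring
      rw [this, ← ea_natCast]
      congr 1; push_cast; ring
    rw [h1, h2, conj_ea, ← ea_add]
    congr 1; rw [hw]; ring
  rw [Fintype.sum_congr _ _ per]
  have h3 : ∑ x : Fin d, ea d (w * ((x : ℕ) : ZMod d))
      = ∑ k : ZMod d, ea d (w * k) := by
    rw [zmod_sum_eq d (fun k => ea d (w * k))]
    exact Fin.sum_univ_eq_sum_range (fun i => ea d (w * (i : ZMod d))) d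
  rw [h3, sum_char]
  simp only [hw, sub_eq_zero]

lemma inner_expand (d : ℕ) (v v' : EuclideanSpace ℂ (Fin d × Fin 2))
    (a a' : ℕ → ℂ) (f f' : ℕ → Fin d → ℂ) (g g' : ℕ → Fin 2 → ℂ)
    (hv : ∀ p, v p = ∑ j ∈ Finset.range d, a j * f j p.1 * g j p.2)
    (hv' : ∀ p, v' p = ∑ j ∈ Finset.range d, a' j * f' j p.1 * g' j p.2) :
    (inner ℂ v' v : ℂ) = ∑ j ∈ Finset.range d, ∑ j' ∈ Finset.range d,
      (starRingEnd ℂ) (a' j') * a j *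
        (∑ x : Fin d, (starRingEnd ℂ) (f' j' x) * f j x) *
        (∑ s : Fin 2, (starRingEnd ℂ) (g' j' s) * g j s) := by
  have step1 : (inner ℂ v' v : ℂ) = ∑ p : Fin d × Fin 2, (starRingEnd ℂ) (v' p) * v p := by
    simp [PiLp.inner_apply, RCLike.inner_apply]
    exact Finset.sum_congr rfl fun _ _ => mul_comm _ _
  rw [step1]
  calc ∑ p : Fin d × Fin 2, (starRingEnd ℂ) (v' p) * v p
      = ∑ p : Fin d × Fin 2, ∑ j ∈ Finset.range d, ∑ j' ∈ Finset.range d,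
          ((starRingEnd ℂ) (a' j') * a j) * ((starRingEnd ℂ) (f' j' p.1) * f j p.1) *
            ((starRingEnd ℂ) (g' j' p.2) * g j p.2) := by
        refine Fintype.sum_congr _ _ fun p => ?_
        rw [hv, hv', map_sum, Finset.sum_mul_sum, Finset.sum_comm]
        refine Finset.sum_congr rfl fun j _ => Finset.sum_congr rfl fun j' _ => ?_
        simp only [map_mul]; ring
    _ = ∑ j ∈ Finset.range d, ∑ j' ∈ Finset.range d, ∑ p : Fin d × Fin 2,
          ((starRingEnd ℂ) (a' j') * a j) * ((starRingEnd ℂ) (f' j' p.1) * f j p.1) *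
            ((starRingEnd ℂ) (g' j' p.2) * g j p.2) := by
        rw [Finset.sum_comm]
        exact Finset.sum_congr rfl fun j _ => Finset.sum_comm
    _ = ∑ j ∈ Finset.range d, ∑ j' ∈ Finset.range d,
          (starRingEnd ℂ) (a' j') * a j *
            (∑ x : Fin d, (starRingEnd ℂ) (f' j' x) * f j x) *
            (∑ s : Fin 2, (starRingEnd ℂ) (g' j' s) * g j s) := by
        refine Finset.sum_congr rfl fun j _ => Finset.sum_congr rfl fun j' _ => ?_
        rw [Fintype.sum_prod_type, mul_assoc ((starRingEnd ℂ) (a' j') * a j)]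
        conv_rhs => rw [Finset.sum_mul_sum, Finset.mul_sum]
        refine Finset.sum_congr rfl fun x _ => ?_
        rw [Finset.mul_sum]
        refine Finset.sum_congr rfl fun s _ => ?_
        ring

lemma qw_apply (d q m : ℕ) (β : ℂ) (p : Fin d × Fin 2) :
    qwGenEigvec d q m β p =
      ∑ j ∈ Finset.range d, aa d q m β j * fF d q j p.1 * gG d q β j p.2 := by
  unfold qwGenEigvec
  simp only [WithLp.ofLp_toLp]
  rw [Finset.mul_sum]
  refine Finset.sum_congr rfl fun j hj => ?_
  have hE : Complex.exp (Complex.I *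
      ((-((q : ℝ) * (2 * Real.pi / d) / 2) * (j : ℝ) ^ 2
        + ((m : ℝ) * (2 * Real.pi / d) + (q : ℝ) * Real.pi) * (j : ℝ))))
      = eI (chi d q m j) := by
    rw [eI]; congr 1; rw [chi]; push_cast; ring
  have hFx : Complex.exp (Complex.I * ((j * q : ℕ) : ℝ) * (2 * Real.pi / d) * ((p.1 : ℕ) : ℝ))
      = fF d q j p.1 := by
    rw [fF, eI]; congr 1; push_cast; ring
  have hGs : (if p.2 = 0 then (1:ℂ)
      else β * Complex.exp (2 * Complex.I * q * (2 * Real.pi / d) * (j : ℝ)))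
      = gG d q β j p.2 := by
    rw [gG]
    split_ifs with h
    · rfl
    · congr 1; rw [eI]; congr 1; push_cast; ring
  rw [hE, hFx, hGs, aa]
  push_cast
  ring

lemma eI_zero' : eI 0 = 1 := by simp [eI]

end QWAux

open QWAux in
theorem qw_eigvec_overlap_bound (d : ℕ) (hd : d.Prime) (hodd : Odd d)
    (q q' m m' : ℕ) (hq1 : 1 ≤ q) (hq : q < d) (hq'1 : 1 ≤ q') (hq' : q' < d)
    (hm : m < d) (hm' : m' < d) (hne : q ≠ q')
    (τ τ' : ℤ) (hτ : τ = 1 ∨ τ = -1) (hτ' : τ' = 1 ∨ τ' = -1)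
    (β β' : ℂ) :
    ‖(inner ℂ (qwGenEigvec d q' m' β') (qwGenEigvec d q m β) : ℂ)‖
      ≤ 1 / Real.sqrt d := by
  have hF : Fact d.Prime := ⟨hd⟩
  have hNZ : NeZero d := ⟨hd.ne_zero⟩
  have hd1 : 1 < d := hd.one_lt
  -- ZMod facts
  have hqz : (q : ZMod d) ≠ 0 := by
    rw [Ne, ZMod.natCast_eq_zero_iff]
    intro hdvd
    have := Nat.le_of_dvd (by omega) hdvd
    omega
  have hq'z : (q' : ZMod d) ≠ 0 := by
    rw [Ne, ZMod.natCast_eq_zero_iff]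
    intro hdvd
    have := Nat.le_of_dvd (by omega) hdvd
    omega
  have hnez : (q : ZMod d) ≠ (q' : ZMod d) := by
    intro h
    apply hne
    have := congrArg ZMod.val h
    rwa [ZMod.val_cast_of_lt hq, ZMod.val_cast_of_lt hq'] at this
  set c : ZMod d := (q : ZMod d) * (q' : ZMod d)⁻¹ with hc
  -- expand inner product
  rw [inner_expand d (qwGenEigvec d q m β) (qwGenEigvec d q' m' β')
    (aa d q m β) (aa d q' m' β') (fF d q) (fF d q') (gG d q β) (gG d q' β')
    (qw_apply d q m β) (qw_apply d q' m' β')]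
  -- substitute x_sum and collapse the j' sum
  have collapse : ∀ j ∈ Finset.range d,
      ∑ j' ∈ Finset.range d, (starRingEnd ℂ) (aa d q' m' β' j') * aa d q m β j *
        (∑ x : Fin d, (starRingEnd ℂ) (fF d q' j' x) * fF d q j x) *
        (∑ s : Fin 2, (starRingEnd ℂ) (gG d q' β' j' s) * gG d q β j s)
      = (starRingEnd ℂ) (aa d q' m' β' ((c * (j : ZMod d)).val)) * aa d q m β j * (d : ℂ) *
        (∑ s : Fin 2, (starRingEnd ℂ) (gG d q' β' ((c * (j : ZMod d)).val) s) * gG d q β j s) := by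
    intro j hj
    have hstep : ∀ j' ∈ Finset.range d,
        (starRingEnd ℂ) (aa d q' m' β' j') * aa d q m β j *
          (∑ x : Fin d, (starRingEnd ℂ) (fF d q' j' x) * fF d q j x) *
          (∑ s : Fin 2, (starRingEnd ℂ) (gG d q' β' j' s) * gG d q β j s)
        = (starRingEnd ℂ) (aa d q' m' β' j') * aa d q m β j *
          (if ((j * q : ℕ) : ZMod d) = ((j' * q' : ℕ) : ZMod d) then (d : ℂ) else 0) *
          (∑ s : Fin 2, (starRingEnd ℂ) (gG d q' β' j' s) * gG d q β j s) := by
      intro j' _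
      rw [x_sum]
    rw [Finset.sum_congr rfl hstep]
    rw [Finset.sum_eq_single ((c * (j : ZMod d)).val)]
    · rw [if_pos]
      push_cast [ZMod.natCast_zmod_val]
      rw [hc]
      field_simp
    · intro b hb hbne
      rw [if_neg, mul_zero, zero_mul]
      intro hPb
      apply hbne
      push_cast at hPb
      have hbz : (b : ZMod d) = c * (j : ZMod d) := by
        rw [hc]
        field_simp
        linear_combination -hPb
      have : (b : ZMod d).val = b := ZMod.val_cast_of_lt (Finset.mem_range.mp hb)
      rw [← this, hbz]
    · intro hnot
      exact absurd (Finset.mem_range.mpr (ZMod.val_lt _)) hnot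
  rw [Finset.sum_congr rfl collapse]
  -- rewrite each term via uu
  set NA : ℝ := (1 / Real.sqrt (1 + ‖β‖ ^ 2)) * (1 / Real.sqrt d) * (1 / Real.sqrt d)
    with hNA
  set NA' : ℝ := (1 / Real.sqrt (1 + ‖β'‖ ^ 2)) * (1 / Real.sqrt d) * (1 / Real.sqrt d)
    with hNA'
  have term_eq : ∀ j ∈ Finset.range d,
      (starRingEnd ℂ) (aa d q' m' β' ((c * (j : ZMod d)).val)) * aa d q m β j * (d : ℂ) *
        (∑ s : Fin 2, (starRingEnd ℂ) (gG d q' β' ((c * (j : ZMod d)).val) s) * gG d q β j s)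
      = ((NA' * NA * d : ℝ) : ℂ) *
          (uu d q q' m m' 0 c (j : ZMod d) +
            ((starRingEnd ℂ) β' * β) * uu d q q' m m' 1 c (j : ZMod d)) := by
    intro j hj
    have hvj : ((j : ℕ) : ZMod d).val = j := ZMod.val_cast_of_lt (Finset.mem_range.mp hj)
    rw [Fin.sum_univ_two]
    have hg0 : ∀ (qq : ℕ) (γ : ℂ) (jj : ℕ), gG d qq γ jj 0 = 1 := fun _ _ _ => if_pos rfl
    have hg1 : ∀ (qq : ℕ) (γ : ℂ) (jj : ℕ),
        gG d qq γ jj 1 = γ * eI (2 * (qq : ℝ) * (2 * π / d) * (jj : ℝ)) :=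
      fun _ _ _ => if_neg (by decide)
    rw [hg0, hg0, hg1, hg1]
    have huu0 : uu d q q' m m' 0 c (j : ZMod d)
        = eI (chi d q m j) *
          (starRingEnd ℂ) (eI (chi d q' m' ((c * (j : ZMod d)).val))) := by
      rw [uu, hvj]
      norm_num [eI_zero']
    have hC : eI (2 * π / d * ((2 * 1 * q * (((j:ℕ) : ZMod d)).val : ℕ) : ℝ))
        = eI (2 * (q : ℝ) * (2 * π / d) * (j : ℝ)) := by
      rw [hvj]; congr 1; push_cast; ring
    have hD : eI (2 * π / d * ((2 * 1 * q' * ((c * ((j:ℕ) : ZMod d)).val) : ℕ) : ℝ))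
        = eI (2 * (q' : ℝ) * (2 * π / d) * (((c * ((j:ℕ) : ZMod d)).val : ℕ) : ℝ)) := by
      congr 1; push_cast; ring
    have huu1 : uu d q q' m m' 1 c (j : ZMod d)
        = eI (chi d q m j) *
          (starRingEnd ℂ) (eI (chi d q' m' ((c * (j : ZMod d)).val))) *
          eI (2 * (q : ℝ) * (2 * π / d) * (j : ℝ)) *
          (starRingEnd ℂ) (eI (2 * (q' : ℝ) * (2 * π / d) *
            (((c * ((j:ℕ) : ZMod d)).val : ℕ) : ℝ))) := by
      rw [uu, hC, hD, hvj]
    rw [huu0, huu1, aa, aa, hNA, hNA']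
    simp only [map_mul, map_one, Complex.conj_ofReal]
    push_cast
    ring
  rw [Finset.sum_congr rfl term_eq, ← Finset.mul_sum, Finset.sum_add_distrib,
    ← Finset.mul_sum, ← zmod_sum_eq, ← zmod_sum_eq]
  -- bound
  have hb0 := uu_sum_bound d q q' m m' 0 hqz hq'z hnez
  have hb1 := uu_sum_bound d q q' m m' 1 hqz hq'z hnez
  rw [← hc] at hb0 hb1
  set S0 : ℂ := ∑ k : ZMod d, uu d q q' m m' 0 c k
  set S1 : ℂ := ∑ k : ZMod d, uu d q q' m m' 1 c k
  set a : ℝ := ‖β‖ with ha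
  set b : ℝ := ‖β'‖ with hbb
  have ha0 : 0 ≤ a := norm_nonneg β
  have hb0' : 0 ≤ b := norm_nonneg β'
  have hdpos : (0:ℝ) < d := by exact_mod_cast hd.pos
  have hsq : Real.sqrt d * Real.sqrt d = d := Real.mul_self_sqrt (le_of_lt hdpos)
  have hsqpos : 0 < Real.sqrt d := Real.sqrt_pos.mpr hdpos
  have hNApos : 0 ≤ NA' * NA * d := by
    rw [hNA, hNA']; positivity
  have habs1 : ‖((NA' * NA * d : ℝ) : ℂ) * (S0 + (starRingEnd ℂ) β' * β * S1)‖
      ≤ (NA' * NA * d) * (Real.sqrt d + b * a * Real.sqrt d) := by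
    rw [norm_mul, Complex.norm_of_nonneg hNApos]
    apply mul_le_mul_of_nonneg_left _ hNApos
    calc ‖S0 + (starRingEnd ℂ) β' * β * S1‖
        ≤ ‖S0‖ + ‖(starRingEnd ℂ) β' * β * S1‖ :=
          norm_add_le _ _
      _ = ‖S0‖ + b * a * ‖S1‖ := by
          rw [norm_mul, norm_mul, Complex.norm_conj, ha, hbb]
      _ ≤ Real.sqrt d + b * a * Real.sqrt d := by
          have := mul_le_mul_of_nonneg_left hb1 (by positivity : (0:ℝ) ≤ b * a)
          linarith [hb0]
  refine le_trans habs1 ?_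
  -- final numeric inequality
  have hkey : 1 + a * b ≤ Real.sqrt (1 + a ^ 2) * Real.sqrt (1 + b ^ 2) := by
    rw [← Real.sqrt_mul (by positivity)]
    have h1 : (1 + a * b) = Real.sqrt ((1 + a * b) ^ 2) :=
      (Real.sqrt_sq (by positivity)).symm
    rw [h1]
    apply Real.sqrt_le_sqrt
    nlinarith [sq_nonneg (a - b)]
  have hApos : 0 < Real.sqrt (1 + a ^ 2) := Real.sqrt_pos.mpr (by positivity)
  have hA'pos : 0 < Real.sqrt (1 + b ^ 2) := Real.sqrt_pos.mpr (by positivity)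
  have hgoal : 1 / Real.sqrt (1 + ‖β'‖ ^ 2) * (1 / Real.sqrt d) * (1 / Real.sqrt d) *
      (1 / Real.sqrt (1 + ‖β‖ ^ 2) * (1 / Real.sqrt d) * (1 / Real.sqrt d)) * (d:ℝ) *
      (Real.sqrt d + ‖β'‖ * ‖β‖ * Real.sqrt d)
      = (1 + a * b) / (Real.sqrt (1 + a ^ 2) * Real.sqrt (1 + b ^ 2) * Real.sqrt d) := by
    rw [← ha, ← hbb]
    set s : ℝ := Real.sqrt d with hs
    rw [← hsq]
    field_simp
  rw [hgoal, div_le_div_iff₀ (by positivity) hsqpos]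
  nlinarith [hkey, hsqpos.le, mul_le_mul_of_nonneg_right hkey hsqpos.le]
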